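/- Let T1, T2 be q-commuting contractions on H with T = T1T2, let (G1, G2) be the fundamental operators of (T1*, T2*), and (W1, W2) the canonical q-commuting unitary pair on Q_{T*}. Then the triple (𝕎1, 𝕎2, V_D) on H²(D_{T*}) ⊕ Q_{T*}, where 𝕎1 = M_{G1*+zG2} R_q ⊕ W1, 𝕎2 = R_{q̄} M_{G2*+zG1} ⊕ W2, and V_D = M_z ⊕ W_D, satisfies: 𝕎1 V_D = q V_D 𝕎1, 𝕎2 V_D = q̄ V_D 𝕎2, and 𝕎1 = q̄ 𝕎2* V_D. -/

import Mathlib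

set_option synthInstance.maxHeartbeats 1000000
set_option maxHeartbeats 2000000

open ContinuousLinearMap
open scoped ENNReal

/-- The Douglas-model pseudo `q`-commuting contractive triple.  Let `T1, T2` be
`q`-commuting contractions with `T = T1 T2`, let `(G1, G2)` be the fundamental operators of
`(T1*, T2*)` (operators on the defect space `𝒟_{T*}` satisfying the fundamental equations),
and `(W1, W2)` the canonical `q`-commuting unitary pair on `𝒬_{T*}` (with
`W1 W2 = q W2 W1 = W_D`, and `Wᵢ* ∘ (incl ∘ Q_{T*}) = (incl ∘ Q_{T*}) ∘ Tᵢ*`).  Then, on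
`H²(𝒟_{T*}) ⊕ 𝒬_{T*}` (with `H²` realized as `ℓ²` of Taylor coefficients and `⊕` the
`ℓ²`-direct sum), the operators `𝕎1 = M_{G1*+zG2} R_q ⊕ W1`, `𝕎2 = R_{q̄} M_{G2*+zG1} ⊕ W2`
and `V_D = M_z ⊕ W_D` satisfy `𝕎1 V_D = q V_D 𝕎1`, `𝕎2 V_D = q̄ V_D 𝕎2`, and
`𝕎1 = q̄ 𝕎2* V_D`. -/
theorem douglas_model_pseudo_qcommuting_triple
    {H : Type*} [NormedAddCommGroup H] [InnerProductSpace ℂ H] [CompleteSpace H]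
    {L : Type*} [NormedAddCommGroup L] [InnerProductSpace ℂ L] [CompleteSpace L]
    (q : ℂ) (hq : ‖q‖ = 1)
    (T1 T2 : H →L[ℂ] H) (hT1 : ‖T1‖ ≤ 1) (hT2 : ‖T2‖ ≤ 1)
    (hcomm : T1 * T2 = q • (T2 * T1))
    -- the defect operator and defect space of T* = (T1 T2)*
    (Dst : H →L[ℂ] H) (hDst : Dst.IsPositive)
    (hDstsq : Dst * Dst = 1 - (T1 * T2) * adjoint (T1 * T2))
    (M : Submodule ℂ H) (hM : M = (LinearMap.range (Dst : H →ₗ[ℂ] H)).topologicalClosure)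
    [CompleteSpace M]
    -- the fundamental operators of (T1*, T2*) on the defect space
    (G1 G2 : M →L[ℂ] M)
    (hG1 : ∀ (h : H) (x : M), (x : H) = Dst h →
      Dst ((G1 x : M) : H) = (adjoint T1 - T2 * adjoint (T1 * T2)) h)
    (hG2 : ∀ (h : H) (x : M), (x : H) = Dst h →
      Dst ((G2 x : M) : H) = (adjoint T2 - q • (T1 * adjoint (T1 * T2))) h)
    -- the canonical q-commuting unitary pair (W1, W2) on L = 𝒬_{T*}, W_D = W1 W2
    (W1 W2 WD : L →L[ℂ] L)
    (hW1uni : adjoint W1 ∘L W1 = 1 ∧ W1 ∘L adjoint W1 = 1)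
    (hW2uni : adjoint W2 ∘L W2 = 1 ∧ W2 ∘L adjoint W2 = 1)
    (hWD : W1 ∘L W2 = WD) (hWq : W1 ∘L W2 = q • (W2 ∘L W1))
    (jQ : H →L[ℂ] L)
    (hj1 : ∀ h : H, adjoint W1 (jQ h) = jQ (adjoint T1 h))
    (hj2 : ∀ h : H, adjoint W2 (jQ h) = jQ (adjoint T2 h))
    (hjD : ∀ h : H, adjoint WD (jQ h) = jQ (adjoint (T1 * T2) h))
    -- the block operators on H²(𝒟_{T*}): the shift M_z, M_{G1*+zG2} R_q, R_{q̄} M_{G2*+zG1}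
    (S A1 A2 : lp (fun _ : ℕ => M) 2 →L[ℂ] lp (fun _ : ℕ => M) 2)
    (hS : ∀ f : lp (fun _ : ℕ => M) 2, (S f) 0 = 0 ∧ ∀ n : ℕ, (S f) (n + 1) = f n)
    (hA1 : ∀ f : lp (fun _ : ℕ => M) 2,
      (A1 f) 0 = adjoint G1 (f 0) ∧
      ∀ n : ℕ, (A1 f) (n + 1) = q ^ (n + 1) • adjoint G1 (f (n + 1)) + q ^ n • G2 (f n))
    (hA2 : ∀ f : lp (fun _ : ℕ => M) 2,
      (A2 f) 0 = adjoint G2 (f 0) ∧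
      ∀ n : ℕ, (A2 f) (n + 1)
        = (starRingEnd ℂ q) ^ (n + 1) • (adjoint G2 (f (n + 1)) + G1 (f n)))
    -- the direct-sum operators 𝕎1 = A1 ⊕ W1, 𝕎2 = A2 ⊕ W2, V_D = S ⊕ W_D
    (𝕎1 𝕎2 VD : WithLp 2 (lp (fun _ : ℕ => M) 2 × L) →L[ℂ]
      WithLp 2 (lp (fun _ : ℕ => M) 2 × L))
    (h𝕎1 : ∀ (f : lp (fun _ : ℕ => M) 2) (y : L),
      WithLp.equiv 2 _ (𝕎1 ((WithLp.equiv 2 _).symm (f, y))) = (A1 f, W1 y))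
    (h𝕎2 : ∀ (f : lp (fun _ : ℕ => M) 2) (y : L),
      WithLp.equiv 2 _ (𝕎2 ((WithLp.equiv 2 _).symm (f, y))) = (A2 f, W2 y))
    (hVD : ∀ (f : lp (fun _ : ℕ => M) 2) (y : L),
      WithLp.equiv 2 _ (VD ((WithLp.equiv 2 _).symm (f, y))) = (S f, WD y)) :
    𝕎1 ∘L VD = q • (VD ∘L 𝕎1) ∧
    𝕎2 ∘L VD = (starRingEnd ℂ q) • (VD ∘L 𝕎2) ∧
    𝕎1 = (starRingEnd ℂ q) • (adjoint 𝕎2 ∘L VD) := by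
  classical
  have hq' : q * (starRingEnd ℂ q) = 1 := by
    rw [Complex.mul_conj]; norm_cast
    rw [Complex.normSq_eq_norm_sq, hq]; norm_num
  have hq'' : (starRingEnd ℂ q) * q = 1 := by rw [mul_comm]; exact hq'
  have hcqn : ‖starRingEnd ℂ q‖ = 1 := by rw [RCLike.norm_conj, hq]
  -- pointwise descriptions of the direct-sum operators
  have h𝕎1' : ∀ x : WithLp 2 (lp (fun _ : ℕ => M) 2 × L),
      𝕎1 x = (WithLp.equiv 2 _).symm (A1 (WithLp.equiv 2 _ x).1, W1 (WithLp.equiv 2 _ x).2) :=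
    fun x => (Equiv.eq_symm_apply _).mpr (by simpa only [Prod.mk.eta, Equiv.symm_apply_apply] using h𝕎1 (WithLp.equiv 2 _ x).1 (WithLp.equiv 2 _ x).2)
  have h𝕎2' : ∀ x : WithLp 2 (lp (fun _ : ℕ => M) 2 × L),
      𝕎2 x = (WithLp.equiv 2 _).symm (A2 (WithLp.equiv 2 _ x).1, W2 (WithLp.equiv 2 _ x).2) :=
    fun x => (Equiv.eq_symm_apply _).mpr (by simpa only [Prod.mk.eta, Equiv.symm_apply_apply] using h𝕎2 (WithLp.equiv 2 _ x).1 (WithLp.equiv 2 _ x).2)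
  have hVD' : ∀ x : WithLp 2 (lp (fun _ : ℕ => M) 2 × L),
      VD x = (WithLp.equiv 2 _).symm (S (WithLp.equiv 2 _ x).1, WD (WithLp.equiv 2 _ x).2) :=
    fun x => (Equiv.eq_symm_apply _).mpr (by simpa only [Prod.mk.eta, Equiv.symm_apply_apply] using hVD (WithLp.equiv 2 _ x).1 (WithLp.equiv 2 _ x).2)
  -- coordinates of scalar multiples in lp
  have hsm : ∀ (c : ℂ) (F : lp (fun _ : ℕ => M) 2) (k : ℕ), (c • F) k = c • F k :=
    fun c F k => by rw [lp.coeFn_smul]; rfl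
  -- pointwise q-commutation of W1 W2
  have hWq' : ∀ v : L, W1 (W2 v) = q • W2 (W1 v) := by
    intro v
    have h := congrArg (fun T : L →L[ℂ] L => T v) hWq
    simpa using h
  have hW2inner : ∀ a b : L, (inner ℂ (W2 a) (W2 b) : ℂ) = inner ℂ a b := by
    intro a b
    have h := congrArg (fun T : L →L[ℂ] L => T b) hW2uni.1
    simp only [ContinuousLinearMap.coe_comp', Function.comp_apply, ContinuousLinearMap.one_apply] at h
    rw [← ContinuousLinearMap.adjoint_inner_right, h]
  -- lp-part commutation relations
  have hA1S : ∀ f : lp (fun _ : ℕ => M) 2, A1 (S f) = q • S (A1 f) := by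
    intro f
    apply lp.ext; funext n
    have hSf := hS f; have hA1f := hA1 f; have hA1Sf := hA1 (S f); have hSA1f := hS (A1 f)
    cases n with
    | zero => rw [hsm, hA1Sf.1, hSf.1, hSA1f.1, map_zero, smul_zero]
    | succ n =>
      rw [hsm, hA1Sf.2 n, hSA1f.2 n, hSf.2 n]
      cases n with
      | zero =>
        rw [hSf.1, hA1f.1, map_zero, smul_zero, add_zero, pow_one]
      | succ m =>
        rw [hSf.2 m, hA1f.2 m, smul_add, smul_smul, smul_smul, ← pow_succ', ← pow_succ']
  have hA2S : ∀ f : lp (fun _ : ℕ => M) 2, A2 (S f) = (starRingEnd ℂ q) • S (A2 f) := by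
    intro f
    apply lp.ext; funext n
    have hSf := hS f; have hA2f := hA2 f; have hA2Sf := hA2 (S f); have hSA2f := hS (A2 f)
    cases n with
    | zero => rw [hsm, hA2Sf.1, hSf.1, hSA2f.1, map_zero, smul_zero]
    | succ n =>
      rw [hsm, hA2Sf.2 n, hSA2f.2 n, hSf.2 n]
      cases n with
      | zero =>
        rw [hSf.1, hA2f.1, map_zero, add_zero, pow_one]
      | succ m =>
        rw [hSf.2 m, hA2f.2 m, smul_smul, ← pow_succ']
  -- W-part commutation relations
  have hW1WD : ∀ y : L, W1 (WD y) = q • WD (W1 y) := by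
    intro y
    rw [← hWD]
    simp only [ContinuousLinearMap.coe_comp', Function.comp_apply]
    rw [hWq' y, map_smul]
  have hW2WD : ∀ y : L, W2 (WD y) = (starRingEnd ℂ q) • WD (W2 y) := by
    intro y
    rw [← hWD]
    simp only [ContinuousLinearMap.coe_comp', Function.comp_apply]
    rw [hWq' (W2 y), smul_smul, hq'', one_smul]
  refine ⟨?_, ?_, ?_⟩
  · -- 𝕎1 VD = q VD 𝕎1
    ext x
    simp only [ContinuousLinearMap.coe_comp', Function.comp_apply,
      ContinuousLinearMap.smul_apply]
    rw [hVD' x, h𝕎1' ((WithLp.equiv 2 _).symm (S (WithLp.equiv 2 _ x).1, WD (WithLp.equiv 2 _ x).2)),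
      h𝕎1' x, hVD' ((WithLp.equiv 2 _).symm (A1 (WithLp.equiv 2 _ x).1, W1 (WithLp.equiv 2 _ x).2)),
      (show ∀ (c : ℂ) (y : lp (fun _ : ℕ => M) 2 × L), c • (WithLp.equiv 2 _).symm y = (WithLp.equiv 2 _).symm (c • y) from fun _ _ => rfl)]
    exact congrArg _ (Prod.ext (hA1S (WithLp.equiv 2 _ x).1) (hW1WD (WithLp.equiv 2 _ x).2))
  · -- 𝕎2 VD = q̄ VD 𝕎2
    ext x
    simp only [ContinuousLinearMap.coe_comp', Function.comp_apply,
      ContinuousLinearMap.smul_apply]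
    rw [hVD' x, h𝕎2' ((WithLp.equiv 2 _).symm (S (WithLp.equiv 2 _ x).1, WD (WithLp.equiv 2 _ x).2)),
      h𝕎2' x, hVD' ((WithLp.equiv 2 _).symm (A2 (WithLp.equiv 2 _ x).1, W2 (WithLp.equiv 2 _ x).2)),
      (show ∀ (c : ℂ) (y : lp (fun _ : ℕ => M) 2 × L), c • (WithLp.equiv 2 _).symm y = (WithLp.equiv 2 _).symm (c • y) from fun _ _ => rfl)]
    exact congrArg _ (Prod.ext (hA2S (WithLp.equiv 2 _ x).1) (hW2WD (WithLp.equiv 2 _ x).2))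
  · -- 𝕎1 = q̄ 𝕎2* VD
    -- the key ℓ²-inner-product identity
    have keylp : ∀ f g : lp (fun _ : ℕ => M) 2,
        (inner ℂ (A1 f) g : ℂ) = q * inner ℂ (S f) (A2 g) := by
      intro f g
      have hpq : ((2 : ℝ≥0∞)).toReal.HolderConjugate (2 : ℝ≥0∞).toReal :=
        ⟨by norm_num, by norm_num, by norm_num⟩
      have sff : Summable fun m => ‖f m‖ * ‖f m‖ := lp.summable_mul hpq f f
      have sgg : Summable fun m => ‖g m‖ * ‖g m‖ := lp.summable_mul hpq g g
      have sgg1 : Summable fun m => ‖g (m + 1)‖ * ‖g (m + 1)‖ := (summable_nat_add_iff 1).mpr sgg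
      have sa : Summable fun m : ℕ =>
          (starRingEnd ℂ q) ^ (m + 1) * (inner ℂ (ContinuousLinearMap.adjoint G1 (f m)) (g m) : ℂ) := by
        refine Summable.of_norm_bounded
          ((sff.add sgg).mul_left ‖ContinuousLinearMap.adjoint G1‖) fun m => ?_
        have h1 : ‖(inner ℂ (ContinuousLinearMap.adjoint G1 (f m)) (g m) : ℂ)‖ ≤
            ‖ContinuousLinearMap.adjoint G1 (f m)‖ * ‖g m‖ := norm_inner_le_norm _ _
        have h2 : ‖ContinuousLinearMap.adjoint G1 (f m)‖ ≤
            ‖ContinuousLinearMap.adjoint G1‖ * ‖f m‖ := ContinuousLinearMap.le_opNorm _ _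
        rw [norm_mul, norm_pow, hcqn, one_pow, one_mul]
        nlinarith [norm_nonneg (g m), norm_nonneg (f m),
          ContinuousLinearMap.opNorm_nonneg (ContinuousLinearMap.adjoint G1),
          norm_nonneg (ContinuousLinearMap.adjoint G1 (f m)),
          sq_nonneg (‖f m‖ - ‖g m‖),
          norm_nonneg (inner ℂ (ContinuousLinearMap.adjoint G1 (f m)) (g m) : ℂ)]
      have sb : Summable fun m : ℕ =>
          (starRingEnd ℂ q) ^ (m + 1) * (inner ℂ (G2 (f m)) (g (m + 1)) : ℂ) := by
        refine Summable.of_norm_bounded ((sff.add sgg1).mul_left ‖G2‖) fun m => ?_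
        have h1 : ‖(inner ℂ (G2 (f m)) (g (m + 1)) : ℂ)‖ ≤ ‖G2 (f m)‖ * ‖g (m + 1)‖ :=
          norm_inner_le_norm _ _
        have h2 : ‖G2 (f m)‖ ≤ ‖G2‖ * ‖f m‖ := ContinuousLinearMap.le_opNorm _ _
        rw [norm_mul, norm_pow, hcqn, one_pow, one_mul]
        nlinarith [norm_nonneg (g (m + 1)), norm_nonneg (f m),
          ContinuousLinearMap.opNorm_nonneg G2, norm_nonneg (G2 (f m)),
          sq_nonneg (‖f m‖ - ‖g (m + 1)‖),
          norm_nonneg (inner ℂ (G2 (f m)) (g (m + 1)) : ℂ)]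
      have hQ : (inner ℂ (S f) (A2 g) : ℂ) =
          (∑' m : ℕ, (starRingEnd ℂ q) ^ (m + 1) * inner ℂ (G2 (f m)) (g (m + 1)))
            + ∑' m : ℕ, (starRingEnd ℂ q) ^ (m + 1) *
                inner ℂ (ContinuousLinearMap.adjoint G1 (f m)) (g m) := by
        rw [lp.inner_eq_tsum, Summable.tsum_eq_zero_add (lp.summable_inner (𝕜 := ℂ) (S f) (A2 g))]
        have h0 : (inner ℂ ((S f) 0) ((A2 g) 0) : ℂ) = 0 := by
          rw [(hS f).1, inner_zero_left]
        have hsucc : ∀ m : ℕ, (inner ℂ ((S f) (m + 1)) ((A2 g) (m + 1)) : ℂ) =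
            (starRingEnd ℂ q) ^ (m + 1) * inner ℂ (G2 (f m)) (g (m + 1)) +
            (starRingEnd ℂ q) ^ (m + 1) *
              inner ℂ (ContinuousLinearMap.adjoint G1 (f m)) (g m) := by
          intro m
          rw [(hS f).2 m, (hA2 g).2 m, inner_smul_right, inner_add_right,
            ContinuousLinearMap.adjoint_inner_right, ← ContinuousLinearMap.adjoint_inner_left]
          ring
        rw [h0, zero_add, tsum_congr hsucc, Summable.tsum_add sb sa]
      have s1 : Summable (fun m : ℕ => q * ((starRingEnd ℂ q) ^ (m + 1 + 1) *
          (inner ℂ (ContinuousLinearMap.adjoint G1 (f (m + 1))) (g (m + 1)) : ℂ))) := by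
        have := (summable_nat_add_iff 1).mpr sa
        exact this.mul_left q
      have s2 : Summable (fun m : ℕ => q * ((starRingEnd ℂ q) ^ (m + 1) *
          (inner ℂ (G2 (f m)) (g (m + 1)) : ℂ))) := sb.mul_left q
      have hP : (inner ℂ (A1 f) g : ℂ) =
          q * ((∑' m : ℕ, (starRingEnd ℂ q) ^ (m + 1) * inner ℂ (G2 (f m)) (g (m + 1)))
            + ∑' m : ℕ, (starRingEnd ℂ q) ^ (m + 1) *
                inner ℂ (ContinuousLinearMap.adjoint G1 (f m)) (g m)) := by
        rw [lp.inner_eq_tsum, Summable.tsum_eq_zero_add (lp.summable_inner (𝕜 := ℂ) (A1 f) g)]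
        have h0 : (inner ℂ ((A1 f) 0) (g 0) : ℂ) =
            q * ((starRingEnd ℂ q) ^ (0 + 1) *
              inner ℂ (ContinuousLinearMap.adjoint G1 (f 0)) (g 0)) := by
          rw [(hA1 f).1]
          linear_combination
            (-(inner ℂ (ContinuousLinearMap.adjoint G1 (f 0)) (g 0) : ℂ)) * hq'
        have hsucc : ∀ m : ℕ, (inner ℂ ((A1 f) (m + 1)) (g (m + 1)) : ℂ) =
            q * ((starRingEnd ℂ q) ^ (m + 1 + 1) *
              inner ℂ (ContinuousLinearMap.adjoint G1 (f (m + 1))) (g (m + 1))) +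
            q * ((starRingEnd ℂ q) ^ (m + 1) * inner ℂ (G2 (f m)) (g (m + 1))) := by
          intro m
          rw [(hA1 f).2 m, inner_add_left, inner_smul_left, inner_smul_left, map_pow, map_pow]
          linear_combination
            (-((starRingEnd ℂ q) ^ (m + 1) *
                (inner ℂ (ContinuousLinearMap.adjoint G1 (f (m + 1))) (g (m + 1)) : ℂ) +
              (starRingEnd ℂ q) ^ m * (inner ℂ (G2 (f m)) (g (m + 1)) : ℂ))) * hq'
        rw [h0, tsum_congr hsucc, Summable.tsum_add s1 s2, tsum_mul_left, tsum_mul_left,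
          Summable.tsum_eq_zero_add sa]
        ring
      rw [← hQ] at hP
      exact hP
    -- the key W-part inner-product identity
    have keyW : ∀ y w : L, (inner ℂ (W1 y) w : ℂ) = q * inner ℂ (WD y) (W2 w) := by
      intro y w
      rw [← hWD]
      simp only [ContinuousLinearMap.coe_comp', Function.comp_apply]
      rw [hWq' y, inner_smul_left, hW2inner, ← mul_assoc, hq', one_mul]
    ext x
    apply ext_inner_right ℂ
    intro z
    simp only [ContinuousLinearMap.coe_comp', Function.comp_apply,
      ContinuousLinearMap.smul_apply]
    rw [inner_smul_left, Complex.conj_conj, ContinuousLinearMap.adjoint_inner_left]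
    have lhs : (inner ℂ (𝕎1 x) z : ℂ) =
        inner ℂ (A1 (WithLp.equiv 2 _ x).1) (WithLp.equiv 2 _ z).1 +
        inner ℂ (W1 (WithLp.equiv 2 _ x).2) (WithLp.equiv 2 _ z).2 := by
      rw [h𝕎1' x]; rfl
    have rhs : (inner ℂ (VD x) (𝕎2 z) : ℂ) =
        inner ℂ (S (WithLp.equiv 2 _ x).1) (A2 (WithLp.equiv 2 _ z).1) +
        inner ℂ (WD (WithLp.equiv 2 _ x).2) (W2 (WithLp.equiv 2 _ z).2) := by
      rw [hVD' x, h𝕎2' z]; rfl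
    rw [lhs, rhs, mul_add, keylp, keyW]
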